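/- arXiv:math/0409080 — 2 statements merged into one kernel-verified Lean document; each statement's English description precedes it below -/
import Mathlib

section
/- Let M and N be matroids with finite disjoint ground sets S and T. Then the dual of the free product equals the free product of the duals in reverse order: (M □ N)* = N* □ M*, where M* and N* denote the dual matroids of M and N. -/
open Set Matroid

noncomputable def mrk {α : Type*} (M : Matroid α) (X : Set α) : ℕ :=
  sSup (Set.ncard '' {I | M.Indep I ∧ I ⊆ X})

section Helpers

variable {α : Type*} {M : Matroid α} {X Y I B : Set α}

lemma le_mrk (hE : M.E.Finite) (hI : M.Indep I) (hIX : I ⊆ X) : I.ncard ≤ mrk M X := by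
  apply le_csSup
  · refine ⟨M.E.ncard, ?_⟩
    rintro n ⟨J, ⟨hJ, -⟩, rfl⟩
    exact ncard_le_ncard hJ.subset_ground hE
  · exact ⟨I, ⟨hI, hIX⟩, rfl⟩

lemma exists_mrk (hE : M.E.Finite) (X : Set α) :
    ∃ I, M.Indep I ∧ I ⊆ X ∧ I.ncard = mrk M X := by
  have hne : (Set.ncard '' {I | M.Indep I ∧ I ⊆ X}).Nonempty :=
    ⟨0, ∅, ⟨M.empty_indep, empty_subset _⟩, by simp⟩
  have hbdd : BddAbove (Set.ncard '' {I | M.Indep I ∧ I ⊆ X}) := by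
    refine ⟨M.E.ncard, ?_⟩
    rintro n ⟨J, ⟨hJ, -⟩, rfl⟩
    exact ncard_le_ncard hJ.subset_ground hE
  obtain ⟨I, ⟨hI, hIX⟩, hc⟩ := Nat.sSup_mem hne hbdd
  exact ⟨I, hI, hIX, hc⟩

lemma mrk_le_ncard (hE : M.E.Finite) (hX : X.Finite) : mrk M X ≤ X.ncard := by
  obtain ⟨I, -, hIX, hc⟩ := exists_mrk hE X
  rw [← hc]
  exact ncard_le_ncard hIX hX

lemma mrk_mono (hE : M.E.Finite) (h : X ⊆ Y) : mrk M X ≤ mrk M Y := by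
  obtain ⟨I, hI, hIX, hc⟩ := exists_mrk hE X
  rw [← hc]
  exact le_mrk hE hI (hIX.trans h)

lemma mrk_le_rk (hE : M.E.Finite) (X : Set α) : mrk M X ≤ mrk M M.E := by
  obtain ⟨I, hI, -, hc⟩ := exists_mrk hE X
  rw [← hc]
  exact le_mrk hE hI hI.subset_ground

lemma mrk_indep (hE : M.E.Finite) (hI : M.Indep I) : mrk M I = I.ncard :=
  le_antisymm (mrk_le_ncard hE (hE.subset hI.subset_ground)) (le_mrk hE hI Subset.rfl)

lemma base_ncard (hE : M.E.Finite) (hB : M.IsBase B) : B.ncard = mrk M M.E := by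
  refine le_antisymm (le_mrk hE hB.indep hB.subset_ground) ?_
  obtain ⟨I, hI, -, hc⟩ := exists_mrk hE M.E
  obtain ⟨B', hB', hIB'⟩ := hI.exists_isBase_superset
  have hcc : B'.ncard = B.ncard := by
    rw [ncard_def, hB'.encard_eq_encard_of_isBase hB, ← ncard_def]
  rw [← hc, ← hcc]
  exact ncard_le_ncard hIB' (hE.subset hB'.subset_ground)

lemma base_of_ncard (hE : M.E.Finite) (hI : M.Indep I) (h : mrk M M.E ≤ I.ncard) :
    M.IsBase I := by
  obtain ⟨B, hB, hIB⟩ := hI.exists_isBase_superset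
  have : I = B :=
    eq_of_subset_of_ncard_le hIB (by rw [base_ncard hE hB]; exact h)
      (hE.subset hB.subset_ground)
  rwa [this]

lemma mrk_spanning_iff (hE : M.E.Finite) (hY : Y ⊆ M.E) :
    (∃ B, M.IsBase B ∧ B ⊆ Y) ↔ mrk M Y = mrk M M.E := by
  constructor
  · rintro ⟨B, hB, hBY⟩
    exact le_antisymm (mrk_le_rk hE Y)
      (by rw [← base_ncard hE hB]; exact le_mrk hE hB.indep hBY)
  · intro h
    obtain ⟨I, hI, hIY, hc⟩ := exists_mrk hE Y
    exact ⟨I, base_of_ncard hE hI (by rw [← h, ← hc]), hIY⟩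

lemma dual_mrk (hE : M.E.Finite) (hX : X ⊆ M.E) :
    mrk M✶ X + mrk M M.E = X.ncard + mrk M (M.E \ X) := by
  have hE' : M✶.E.Finite := by rwa [dual_ground]
  have hXfin : X.Finite := hE.subset hX
  -- split lemma for a base B : B.ncard = (B ∩ X).ncard + (B ∩ (M.E \ X)).ncard
  have hsplit : ∀ B : Set α, M.IsBase B →
      B.ncard = (B ∩ X).ncard + (B ∩ (M.E \ X)).ncard := by
    intro B hB
    have h1 : (B ∩ X) ∪ (B ∩ (M.E \ X)) = B := by
      rw [← inter_union_distrib_left, union_diff_cancel hX,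
        inter_eq_left.mpr hB.subset_ground]
    have h2 : Disjoint (B ∩ X) (B ∩ (M.E \ X)) :=
      Disjoint.mono inter_subset_right inter_subset_right disjoint_sdiff_right
    conv_lhs => rw [← h1]
    rw [ncard_union_eq h2 (hXfin.subset inter_subset_right)
      ((hE.diff (t := X)).subset inter_subset_right)]
  refine le_antisymm ?_ ?_
  · -- ≤ : any coindependent subset of X is small
    obtain ⟨J, hJ, hJX, hJc⟩ := exists_mrk hE' X
    obtain ⟨hJE, B', hB', hdisj⟩ := dual_indep_iff_exists'.mp hJ
    have h1 : (B' ∩ (M.E \ X)).ncard ≤ mrk M (M.E \ X) :=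
      le_mrk hE (hB'.indep.subset inter_subset_left) inter_subset_right
    have h2 : (B' ∩ X).ncard + J.ncard ≤ X.ncard := by
      rw [← ncard_union_eq (Disjoint.mono_left inter_subset_left hdisj.symm)
        (hXfin.subset inter_subset_right) (hXfin.subset hJX)]
      exact ncard_le_ncard (union_subset inter_subset_right hJX) hXfin
    have h3 := hsplit B' hB'
    have h4 := base_ncard hE hB'
    omega
  · -- ≥ : construct a coindependent subset of X
    obtain ⟨I, hI, hIX, hIc⟩ := exists_mrk hE (M.E \ X)
    obtain ⟨B, hB, hIB⟩ := hI.exists_isBase_superset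
    have hBI : I.ncard ≤ (B ∩ (M.E \ X)).ncard :=
      ncard_le_ncard (subset_inter hIB hIX) ((hE.diff (t := X)).subset inter_subset_right)
    have hXB : (X \ B).ncard + (B ∩ X).ncard = X.ncard := by
      rw [← ncard_union_eq
        (Disjoint.mono_right inter_subset_left disjoint_sdiff_left)
        (hXfin.subset diff_subset) (hXfin.subset inter_subset_right)]
      congr 1
      ext x
      simp only [mem_union, mem_diff, mem_inter_iff]
      tauto
    have hcoind : M✶.Indep (X \ B) :=
      dual_indep_iff_exists'.mpr ⟨diff_subset.trans hX, B, hB, disjoint_sdiff_left⟩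
    have h5 : (X \ B).ncard ≤ mrk M✶ X := le_mrk hE' hcoind diff_subset
    have h3 := hsplit B hB
    have h4 := base_ncard hE hB
    omega

end Helpers

/-- Duality: `(M □ N)✶ = N✶ □ M✶`.  Here `L` is the free product `M □ N` and `L'` is the
free product `N✶ □ M✶` (recall `M✶.E = S` and `N✶.E = T`). -/
theorem stmt_5 {α : Type*} (M N : Matroid α) (S T : Set α)
    (hS : S.Finite) (hT : T.Finite) (hMS : M.E = S) (hNT : N.E = T)
    (hST : Disjoint S T)
    (L : Matroid α) (hLE : L.E = S ∪ T)
    (hLI : ∀ A : Set α, L.Indep A ↔ A ⊆ S ∪ T ∧ M.Indep (A ∩ S) ∧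
      (A ∩ T).ncard - mrk N (A ∩ T) ≤ mrk M S - mrk M (A ∩ S))
    (L' : Matroid α) (hL'E : L'.E = T ∪ S)
    (hL'I : ∀ A : Set α, L'.Indep A ↔ A ⊆ T ∪ S ∧ N✶.Indep (A ∩ T) ∧
      (A ∩ S).ncard - mrk M✶ (A ∩ S) ≤ mrk N✶ T - mrk N✶ (A ∩ T)) :
    L✶ = L' := by
  have hEfin : M.E.Finite := by rw [hMS]; exact hS
  have hNfin : N.E.Finite := by rw [hNT]; exact hT
  have hN'fin : N✶.E.Finite := by rwa [dual_ground]
  have hrM : mrk M M.E = mrk M S := by rw [hMS]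
  have hrN : mrk N N.E = mrk N T := by rw [hNT]
  have hPQ : ∀ P Q : Set α, P ⊆ S → Q ⊆ T → (P ∪ Q) ∩ S = P ∧ (P ∪ Q) ∩ T = Q := by
    intro P Q hP hQ
    constructor
    · rw [union_inter_distrib_right, inter_eq_left.mpr hP,
        (hST.symm.mono_left hQ).inter_eq, union_empty]
    · rw [union_inter_distrib_right, inter_eq_left.mpr hQ,
        (hST.mono_left hP).inter_eq, empty_union]
  have hsplitcard : ∀ A : Set α, A ⊆ S ∪ T → A.ncard = (A ∩ S).ncard + (A ∩ T).ncard := by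
    intro A hA
    have h1 : (A ∩ S) ∪ (A ∩ T) = A := by
      rw [← inter_union_distrib_left, inter_eq_left.mpr hA]
    conv_lhs => rw [← h1]
    rw [ncard_union_eq (hST.mono inter_subset_right inter_subset_right)
      (hS.subset inter_subset_right) (hT.subset inter_subset_right)]
  have hLEfin : L.E.Finite := by rw [hLE]; exact hS.union hT
  -- upper bound on independent sets of L
  have hub : ∀ A, L.Indep A → A.ncard ≤ mrk M S + mrk N T := by
    intro A hA
    rw [hLI] at hA
    obtain ⟨hAsub, hAS, hcond⟩ := hA
    have h1 : (A ∩ S).ncard ≤ mrk M S := le_mrk hEfin hAS inter_subset_right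
    have h4 := mrk_indep hEfin hAS
    have h3 : mrk N (A ∩ T) ≤ mrk N T := by rw [← hrN]; exact mrk_le_rk hNfin _
    have h5 := hsplitcard A hAsub
    omega
  -- rank of L
  have hrkL : mrk L L.E = mrk M S + mrk N T := by
    obtain ⟨IM, hIM, hIMS, hIMc⟩ := exists_mrk hEfin S
    obtain ⟨IN, hIN, hINT, hINc⟩ := exists_mrk hNfin T
    obtain ⟨e1, e2⟩ := hPQ IM IN hIMS hINT
    have hB0i : L.Indep (IM ∪ IN) := by
      rw [hLI]
      refine ⟨union_subset_union hIMS hINT, by rw [e1]; exact hIM, ?_⟩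
      rw [e1, e2, mrk_indep hNfin hIN]
      omega
    have hB0c : (IM ∪ IN).ncard = mrk M S + mrk N T := by
      rw [ncard_union_eq (hST.mono hIMS hINT) (hS.subset hIMS) (hT.subset hINT), hIMc, hINc]
    refine le_antisymm ?_ ?_
    · obtain ⟨I, hI, -, hc⟩ := exists_mrk hLEfin L.E
      rw [← hc]; exact hub I hI
    · rw [← hB0c]; exact le_mrk hLEfin hB0i hB0i.subset_ground
  -- base characterization of L
  have hbase : ∀ B, L.IsBase B ↔ L.Indep B ∧ B.ncard = mrk M S + mrk N T := by
    intro B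
    constructor
    · intro hB
      exact ⟨hB.indep, by rw [base_ncard hLEfin hB, hrkL]⟩
    · rintro ⟨hi, hc⟩
      exact base_of_ncard hLEfin hi (by rw [hrkL, hc])
  -- main extensionality
  refine Matroid.ext_indep (by rw [dual_ground, hLE, hL'E, union_comm]) ?_
  intro I hIE
  rw [dual_ground, hLE] at hIE
  rw [dual_indep_iff_exists', hL'I]
  have hITsub : I ∩ T ⊆ T := inter_subset_right
  have hISsub : I ∩ S ⊆ S := inter_subset_right
  have hLEI : L.E \ I = (S \ I) ∪ (T \ I) := by rw [hLE, union_diff_distrib]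
  have hCS : S \ (I ∩ S) = S \ I := by
    ext x; simp only [mem_diff, mem_inter_iff]; tauto
  have hCT : T \ (I ∩ T) = T \ I := by
    ext x; simp only [mem_diff, mem_inter_iff]; tauto
  have f1 : mrk M✶ (I ∩ S) + mrk M S = (I ∩ S).ncard + mrk M (S \ I) := by
    have h := dual_mrk hEfin (X := I ∩ S) (by rw [hMS]; exact hISsub)
    rwa [hrM, hMS, hCS] at h
  have f2 : mrk N✶ (I ∩ T) + mrk N T = (I ∩ T).ncard + mrk N (T \ I) := by
    have h := dual_mrk hNfin (X := I ∩ T) (by rw [hNT]; exact hITsub)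
    rwa [hrN, hNT, hCT] at h
  have f3 : mrk N✶ T + mrk N T = T.ncard := by
    have h := dual_mrk hNfin (X := T) (by rw [hNT])
    rw [hrN, hNT, diff_self] at h
    have h0 : mrk N (∅ : Set α) = 0 := by
      have := mrk_indep hNfin N.empty_indep; simpa using this
    omega
  have f4 : (I ∩ T).ncard + (T \ I).ncard = T.ncard := by
    have h := ncard_diff_add_ncard_of_subset hITsub hT
    rw [hCT] at h; omega
  have f5 : mrk M (S \ I) ≤ mrk M S := by rw [← hrM]; exact mrk_le_rk hEfin _
  have f6 : mrk N (T \ I) ≤ mrk N T := by rw [← hrN]; exact mrk_le_rk hNfin _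
  have f7 : mrk N (T \ I) ≤ (T \ I).ncard := mrk_le_ncard hNfin (hT.subset diff_subset)
  have f8 : mrk M✶ (I ∩ S) ≤ (I ∩ S).ncard :=
    mrk_le_ncard (by rwa [dual_ground]) (hS.subset hISsub)
  have f9 : mrk N✶ (I ∩ T) ≤ (I ∩ T).ncard := mrk_le_ncard hN'fin (hT.subset hITsub)
  have hex_iff : (∃ B, L.IsBase B ∧ Disjoint I B) ↔ (∃ B, L.IsBase B ∧ B ⊆ L.E \ I) := by
    constructor
    · rintro ⟨B, hB, hd⟩
      exact ⟨B, hB, subset_diff.mpr ⟨hB.subset_ground, hd.symm⟩⟩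
    · rintro ⟨B, hB, hs⟩
      exact ⟨B, hB, ((subset_diff.mp hs).2).symm⟩
  have key : (∃ B, L.IsBase B ∧ B ⊆ L.E \ I) ↔
      (mrk N (T \ I) = mrk N T ∧
        mrk M S + mrk N T ≤ mrk M (S \ I) + (T \ I).ncard) := by
    constructor
    · rintro ⟨B, hB, hBsub⟩
      rw [hbase] at hB
      obtain ⟨hBi, hBc⟩ := hB
      rw [hLI] at hBi
      obtain ⟨hBsub', hBS, hcond⟩ := hBi
      rw [hLEI] at hBsub
      have hBCS : B ∩ S ⊆ S \ I := by
        rintro x ⟨hxB, hxS⟩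
        rcases hBsub hxB with h | h
        · exact h
        · exact (disjoint_left.mp hST hxS h.1).elim
      have hBCT : B ∩ T ⊆ T \ I := by
        rintro x ⟨hxB, hxT⟩
        rcases hBsub hxB with h | h
        · exact (disjoint_left.mp hST h.1 hxT).elim
        · exact h
      have g1 : (B ∩ S).ncard ≤ mrk M (S \ I) := le_mrk hEfin hBS hBCS
      have g2 : (B ∩ T).ncard ≤ (T \ I).ncard := ncard_le_ncard hBCT (hT.subset diff_subset)
      have g3 : mrk N (B ∩ T) ≤ mrk N (T \ I) := mrk_mono hNfin hBCT
      have g4 := mrk_indep hEfin hBS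
      have g5 := hsplitcard B hBsub'
      have g6 : (B ∩ S).ncard ≤ mrk M S := le_mrk hEfin hBS inter_subset_right
      exact ⟨le_antisymm f6 (by omega), by omega⟩
    · rintro ⟨hsp, hineq⟩
      obtain ⟨Is, hIs, hIsCS, hIsc⟩ := exists_mrk hEfin (S \ I)
      obtain ⟨J, hJ, hJCT, hJc⟩ := exists_mrk hNfin (T \ I)
      have hJcard : J.ncard = mrk N T := by rw [hJc, hsp]
      obtain ⟨AT, hJAT, hATCT, hATc⟩ :=
        exists_subsuperset_card_eq (n := mrk N T + (mrk M S - mrk M (S \ I)))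
          hJCT (by omega) (by omega)
      have hIsS : Is ⊆ S := hIsCS.trans diff_subset
      have hATT : AT ⊆ T := hATCT.trans diff_subset
      obtain ⟨e1, e2⟩ := hPQ Is AT hIsS hATT
      have hmAT : mrk N AT = mrk N T := by
        refine le_antisymm (by rw [← hrN]; exact mrk_le_rk hNfin _) ?_
        rw [← hJcard]; exact le_mrk hNfin hJ hJAT
      refine ⟨Is ∪ AT, ?_, by rw [hLEI]; exact union_subset_union hIsCS hATCT⟩
      rw [hbase]
      constructor
      · rw [hLI]
        refine ⟨union_subset (hIsS.trans subset_union_left) (hATT.trans subset_union_right),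
          by rw [e1]; exact hIs, ?_⟩
        rw [e1, e2, hmAT, mrk_indep hEfin hIs, hIsc, hATc]
        omega
      · rw [ncard_union_eq (hST.mono hIsS hATT) (hS.subset hIsS) (hT.subset hATT),
          hIsc, hATc]
        omega
  have hcoT : N✶.Indep (I ∩ T) ↔ mrk N (T \ I) = mrk N T := by
    rw [show N✶.Indep (I ∩ T) ↔ N.Coindep (I ∩ T) from Iff.rfl, coindep_iff_exists', hNT,
      hCT, and_iff_left hITsub]
    have h := mrk_spanning_iff hNfin (Y := T \ I) (by rw [hNT]; exact diff_subset)
    rw [hrN] at h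
    exact h
  rw [hex_iff, key, hcoT]
  constructor
  · rintro ⟨-, hsp, hineq⟩
    refine ⟨by rw [union_comm]; exact hIE, hsp, ?_⟩
    omega
  · rintro ⟨-, hsp, hcond⟩
    exact ⟨by rw [hLE]; exact hIE, hsp, by omega⟩
end

section
/- Let M and N be matroids with finite disjoint ground sets S and T, let L be the free product M □ N, and let U ⊆ S ∪ T with |U| = |S|. Suppose every element of V ∩ S is an isthmus (coloop) of M, where V = (S ∪ T) \ U, and let f : V ∩ S → U ∩ T be any bijection. Let φ₂ : V → T be the bijection that is the identity on V ∩ T and equals f on V ∩ S. Then φ₂ is a weak map from L/U to N: for every subset E ⊆ T independent in N, the set φ₂⁻¹(E) is independent in the contraction L/U. -/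
open Set Matroid

/-- The contraction `L / C`, defined as the dual of the deletion of `C` from the dual:
`L / C = (L✶ \ C)✶`. -/
noncomputable def mcontract {α : Type*} (L : Matroid α) (C : Set α) : Matroid α :=
  (L✶ ↾ (L.E \ C))✶

/-- A loop of a matroid `N` is an element contained in no independent set of `N`. -/
def IsLoopOf {α : Type*} (N : Matroid α) (e : α) : Prop := ∀ I, N.Indep I → e ∉ I

/-- An isthmus (coloop) of a matroid `M` is an element contained in every basis of `M`. -/
def IsIsthmusOf {α : Type*} (M : Matroid α) (e : α) : Prop := ∀ B, M.IsBase B → e ∈ B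

lemma ncard_le_mrk {α : Type*} {M : Matroid α} (hE : M.E.Finite) {I X : Set α}
    (hI : M.Indep I) (hIX : I ⊆ X) : I.ncard ≤ mrk M X := by
  refine le_csSup ⟨M.E.ncard, ?_⟩ ⟨I, ⟨hI, hIX⟩, rfl⟩
  rintro n ⟨J, ⟨hJ, -⟩, rfl⟩
  exact ncard_le_ncard hJ.subset_ground hE

lemma mrk_indep_eq {α : Type*} {M : Matroid α} (hE : M.E.Finite) {I : Set α}
    (hI : M.Indep I) : mrk M I = I.ncard := by
  refine le_antisymm (csSup_le ⟨I.ncard, I, ⟨hI, subset_rfl⟩, rfl⟩ ?_)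
    (ncard_le_mrk hE hI subset_rfl)
  rintro n ⟨J, ⟨hJ, hJI⟩, rfl⟩
  exact ncard_le_ncard hJI (hE.subset hI.subset_ground)

lemma contract_indep_of_union_indep {α : Type*} {L : Matroid α} {U A J : Set α}
    (hJ : L.IsBasis' J U) (hA : A ⊆ L.E \ U) (h : L.Indep (A ∪ J)) :
    (mcontract L U).Indep A := by
  obtain ⟨BL, hBL, hABL⟩ := h.exists_isBase_superset
  have hJU : J ⊆ U := hJ.subset
  have hJBL : J ⊆ BL := (subset_union_right).trans hABL
  set W : Set α := L.E \ U with hW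
  set B : Set α := W \ BL with hB
  have hBbase : (L✶ ↾ W).IsBase B := by
    rw [isBase_restrict_iff']
    constructor
    · refine ⟨?_, diff_subset⟩
      rw [dual_indep_iff_exists']
      exact ⟨(diff_subset.trans diff_subset : B ⊆ L.E), BL, hBL, disjoint_sdiff_left⟩
    · rintro B' ⟨hB'i, hB'W⟩ hBB'
      rw [dual_indep_iff_exists'] at hB'i
      obtain ⟨hB'E, B₂, hB₂, hdisj⟩ := hB'i
      intro e heB'
      have heW : e ∈ W := hB'W heB'
      by_contra heB
      have heBL : e ∈ BL := by
        simp only [hB, mem_diff] at heB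
        exact not_not.mp (fun h' => heB ⟨heW, h'⟩)
      obtain ⟨g, hg, hgbase⟩ := hBL.exchange hB₂ ⟨heBL, fun h' => (hdisj.ne_of_mem heB' h') rfl⟩
      obtain ⟨hgB₂, hgBL⟩ := hg
      have hgU : g ∈ U := by
        by_contra hgU
        have hgW : g ∈ W := ⟨hB₂.subset_ground hgB₂, hgU⟩
        have : g ∈ B := ⟨hgW, hgBL⟩
        exact (hdisj.ne_of_mem (hBB' this) hgB₂) rfl
      have heJ : e ∉ U := heW.2
      have hins : L.Indep (insert g J) := by
        refine hgbase.indep.subset ?_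
        rw [insert_subset_iff]
        refine ⟨mem_insert _ _, ?_⟩
        intro x hx
        exact mem_insert_iff.mpr (Or.inr ⟨hJBL hx, fun h' => heJ (hJU (h' ▸ hx))⟩)
      exact hJ.insert_not_indep ⟨hgU, fun h' => hgBL (hJBL h')⟩ hins
  rw [mcontract, dual_indep_iff_exists']
  refine ⟨by simpa using hA, B, hBbase, ?_⟩
  exact Set.disjoint_left.mpr fun x hxA hxB => hxB.2 (hABL (Or.inl hxA))

/-- Let `L = M □ N`, `U ⊆ S ∪ T` with `|U| = |S|`, suppose every element of `V ∩ S` is an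
isthmus of `M`, where `V = (S ∪ T) \ U`, and let `f : V ∩ S → U ∩ T` be a bijection.
Then the bijection `φ₂ : V → T` which is the identity on `V ∩ T` and `f` on `V ∩ S` is a
weak map from `L/U` to `N`: for every `E ⊆ T` independent in `N`, the set
`φ₂⁻¹(E) = (E \ U) ∪ ((V ∩ S) ∩ f⁻¹(E))` is independent in `L/U`. -/
theorem stmt_11 {α : Type*} (M N : Matroid α) (S T : Set α)
    (hS : S.Finite) (hT : T.Finite) (hMS : M.E = S) (hNT : N.E = T)
    (hST : Disjoint S T)
    (L : Matroid α) (hLE : L.E = S ∪ T)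
    (hLI : ∀ A : Set α, L.Indep A ↔ A ⊆ S ∪ T ∧ M.Indep (A ∩ S) ∧
      (A ∩ T).ncard - mrk N (A ∩ T) ≤ mrk M S - mrk M (A ∩ S))
    (U : Set α) (hU : U ⊆ S ∪ T) (hUcard : U.ncard = S.ncard)
    (hVS : ∀ e ∈ ((S ∪ T) \ U) ∩ S, IsIsthmusOf M e)
    (f : α → α) (hf : Set.BijOn f (((S ∪ T) \ U) ∩ S) (U ∩ T)) :
    ∀ E ⊆ T, N.Indep E →
      (mcontract L U).Indep ((E \ U) ∪ ((((S ∪ T) \ U) ∩ S) ∩ f ⁻¹' E)) := by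
  intro E hET hE
  have hME : M.E.Finite := hMS ▸ hS
  have hNE : N.E.Finite := hNT ▸ hT
  set W : Set α := ((S ∪ T) \ U) ∩ S with hWdef
  have hWS : W ⊆ S := inter_subset_right
  have hWU : Disjoint W U := disjoint_left.mpr fun x hx => (mem_of_mem_inter_left hx).2
  -- W is independent in M
  have hWi : M.Indep W := by
    obtain ⟨B₀, hB₀⟩ := M.exists_isBase
    exact hB₀.indep.subset fun x hx => hVS x hx B₀ hB₀
  -- cardinality of U ∩ T equals that of W
  have hcardUT : (U ∩ T).ncard = W.ncard := by
    rw [← hf.image_eq, ncard_image_of_injOn hf.injOn]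
  -- U ∩ T is independent in L
  have hUTS : U ∩ T ∩ S = ∅ := by
    apply eq_empty_of_forall_notMem
    rintro x ⟨⟨-, hxT⟩, hxS⟩
    exact hST.ne_of_mem hxS hxT rfl
  have hmrk_empty : mrk M (∅ : Set α) = 0 := by
    rw [mrk_indep_eq hME M.empty_indep, ncard_empty]
  have hUTi : L.Indep (U ∩ T) := by
    rw [hLI]
    refine ⟨inter_subset_left.trans hU, ?_, ?_⟩
    · rw [hUTS]; exact M.empty_indep
    · rw [hUTS, inter_eq_self_of_subset_left inter_subset_right, hmrk_empty, hcardUT]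
      have : W.ncard ≤ mrk M S := ncard_le_mrk hME hWi hWS
      omega
  -- extend U ∩ T to a basis J of U in L
  obtain ⟨J, hJ, hUTJ⟩ := hUTi.subset_isBasis'_of_subset inter_subset_left
  have hJU : J ⊆ U := hJ.subset
  have hJT : J ∩ T = U ∩ T := by
    refine subset_antisymm (inter_subset_inter_left T hJU) fun x hx => ⟨hUTJ hx, hx.2⟩
  have hJSi : M.Indep (J ∩ S) := ((hLI J).mp hJ.indep).2.1
  -- the set A
  set A : Set α := (E \ U) ∪ (W ∩ f ⁻¹' E) with hAdef
  have hAsub : A ⊆ L.E \ U := by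
    rw [hLE]
    rintro x (⟨hxE, hxU⟩ | ⟨hxW, -⟩)
    · exact ⟨Or.inr (hET hxE), hxU⟩
    · exact ⟨hxW.1.1, hxW.1.2⟩
  -- independence of A ∪ J in L
  have hES : ∀ x ∈ E, x ∉ S := fun x hx hxS => hST.ne_of_mem hxS (hET hx) rfl
  have hXS : (A ∪ J) ∩ S = (W ∩ f ⁻¹' E) ∪ (J ∩ S) := by
    ext x
    simp only [hAdef, mem_inter_iff, mem_union, mem_diff, mem_preimage]
    constructor
    · rintro ⟨(⟨hxE, -⟩ | hx) | hxJ, hxS⟩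
      · exact absurd hxS (hES x hxE)
      · exact Or.inl hx
      · exact Or.inr ⟨hxJ, hxS⟩
    · rintro (⟨hxW, hxE⟩ | ⟨hxJ, hxS⟩)
      · exact ⟨Or.inl (Or.inr ⟨hxW, hxE⟩), hWS hxW⟩
      · exact ⟨Or.inr hxJ, hxS⟩
  have hXT : (A ∪ J) ∩ T = (E \ U) ∪ (U ∩ T) := by
    ext x
    simp only [hAdef, mem_inter_iff, mem_union, mem_diff, mem_preimage]
    constructor
    · rintro ⟨(hx | ⟨hxW, -⟩) | hxJ, hxT⟩
      · exact Or.inl hx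
      · exact absurd hxT (hST.ne_of_mem (hWS hxW) hxT ∘ fun h => rfl)
      · exact Or.inr ⟨hJU hxJ, hxT⟩
    · rintro (⟨hxE, hxU⟩ | hx)
      · exact ⟨Or.inl (Or.inl ⟨hxE, hxU⟩), hET hxE⟩
      · exact ⟨Or.inr (hUTJ hx), hx.2⟩
  -- X ∩ S independent via a base containing J ∩ S
  obtain ⟨B', hB', hJSB'⟩ := hJSi.exists_isBase_superset
  have hWB' : W ⊆ B' := fun x hx => hVS x hx B' hB'
  have hXSi : M.Indep ((A ∪ J) ∩ S) := by
    rw [hXS]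
    exact hB'.indep.subset (union_subset ((inter_subset_left).trans hWB') hJSB')
  -- arithmetic
  have hWfin : W.Finite := hS.subset hWS
  have hJSfin : (J ∩ S).Finite := hS.subset inter_subset_right
  have hdisj1 : Disjoint (W ∩ f ⁻¹' E) (J ∩ S) :=
    disjoint_left.mpr fun x hx hx2 => (hWU.ne_of_mem hx.1 (hJU hx2.1)) rfl
  have key1 : mrk M ((A ∪ J) ∩ S) = (W ∩ f ⁻¹' E).ncard + (J ∩ S).ncard := by
    rw [mrk_indep_eq hME hXSi, hXS,
      ncard_union_eq hdisj1 (hWfin.subset inter_subset_left) hJSfin]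
  have key2 : W.ncard + (J ∩ S).ncard ≤ mrk M S := by
    rw [← ncard_union_eq (disjoint_left.mpr fun x hx hx2 => (hWU.ne_of_mem hx (hJU hx2.1)) rfl)
      hWfin hJSfin]
    exact ncard_le_mrk hME (hB'.indep.subset (union_subset hWB' hJSB'))
      (union_subset hWS inter_subset_right)
  have hEsub : E ⊆ (A ∪ J) ∩ T := by
    rw [hXT]
    intro x hx
    by_cases hxU : x ∈ U
    · exact Or.inr ⟨hxU, hET hx⟩
    · exact Or.inl ⟨hx, hxU⟩
  have hEcard : E.ncard = (E \ U).ncard + (W ∩ f ⁻¹' E).ncard := by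
    have himg : f '' (W ∩ f ⁻¹' E) = E ∩ U := by
      rw [image_inter_preimage, hf.image_eq]
      ext x
      exact ⟨fun ⟨h1, h2⟩ => ⟨h2, h1.1⟩, fun ⟨h1, h2⟩ => ⟨⟨h2, hET h1⟩, h1⟩⟩
    have : (W ∩ f ⁻¹' E).ncard = (E ∩ U).ncard := by
      rw [← himg, ncard_image_of_injOn (hf.injOn.mono inter_subset_left)]
    rw [this, ← ncard_union_eq (disjoint_left.mpr fun x hx hx2 => hx.2 hx2.2)
      ((hT.subset hET).subset diff_subset) ((hT.subset hET).subset inter_subset_left),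
      diff_union_inter]
  have key3 : (E \ U).ncard + (W ∩ f ⁻¹' E).ncard ≤ mrk N ((A ∪ J) ∩ T) := by
    rw [← hEcard]
    exact ncard_le_mrk hNE hE hEsub
  have key4 : ((A ∪ J) ∩ T).ncard = (E \ U).ncard + W.ncard := by
    rw [hXT, ncard_union_eq (disjoint_left.mpr fun x hx hx2 => hx.2 hx2.1)
      (hT.subset (diff_subset.trans hET)) (hT.subset inter_subset_right), hcardUT]
  have hmWE : (W ∩ f ⁻¹' E).ncard ≤ W.ncard := ncard_le_ncard inter_subset_left hWfin
  have hXi : L.Indep (A ∪ J) := by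
    rw [hLI]
    refine ⟨?_, hXSi, ?_⟩
    · rw [hLE] at hAsub
      exact union_subset (hAsub.trans diff_subset) (hJU.trans hU)
    · omega
  exact contract_indep_of_union_indep hJ hAsub hXi
end
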